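/- arXiv:1108.5647 — 3 statements merged into one kernel-verified Lean document; each statement's English description precedes it below -/
import Mathlib

section
/- Let N > 1 and let X be an N×N Hermitian matrix with Frobenius norm at most 1. Then X can be written as a finite linear combination X = Σ_x λ_x X_x where each X_x is a normalized projector (an orthogonal projector divided by the square root of its rank) and Σ_x |λ_x| ≤ 4√(ln N). -/
open Matrix
/-- The Frobenius norm of a complex matrix. -/
noncomputable def frobNorm {N : ℕ} (A : Matrix (Fin N) (Fin N) ℂ) : ℝ :=
  Real.sqrt ((A * Aᴴ).trace.re)

/-- `X` is a normalized projector: an orthogonal projector of rank `k ≥ 1`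
divided by `√k`. -/
def IsNormalizedProjector {N : ℕ} (X : Matrix (Fin N) (Fin N) ℂ) : Prop :=
  ∃ P : Matrix (Fin N) (Fin N) ℂ, P.IsHermitian ∧ P * P = P ∧ 1 ≤ P.rank ∧
    X = ((Real.sqrt P.rank)⁻¹ : ℂ) • P


lemma harm_le (n : ℕ) : ∑ k ∈ Finset.range n, ((1:ℝ)/(k+1)) ≤ 1 + Real.log n := by
  induction n with
  | zero => simp
  | succ n ih =>
    rcases Nat.eq_zero_or_pos n with h | h
    · subst h; simp
    · have hn : (0:ℝ) < n := by exact_mod_cast h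
      have h1 : Real.log ((n:ℝ)/(n+1)) ≤ (n:ℝ)/(n+1) - 1 :=
        Real.log_le_sub_one_of_pos (by positivity)
      have h2 : Real.log ((n:ℝ)/(n+1)) = Real.log n - Real.log (n+1) :=
        Real.log_div (ne_of_gt hn) (by positivity)
      have h3 : (n:ℝ)/(n+1) - 1 = -(1/(n+1)) := by field_simp; ring
      rw [Finset.sum_range_succ]
      push_cast
      push_cast at ih
      linarith

lemma sqrt_diff_sq_le (x : ℝ) (hx : 0 < x) :
    (Real.sqrt (x+1) - Real.sqrt x)^2 ≤ 1/(4*x) := by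
  have hb : Real.sqrt x ^ 2 = x := Real.sq_sqrt hx.le
  have ha : Real.sqrt (x+1) ^ 2 = x + 1 := Real.sq_sqrt (by linarith)
  have hb0 : 0 < Real.sqrt x := Real.sqrt_pos.2 hx
  have hab : Real.sqrt x ≤ Real.sqrt (x+1) := Real.sqrt_le_sqrt (by linarith)
  rw [le_div_iff₀ (by positivity)]
  nlinarith [sq_nonneg (Real.sqrt (x+1) - Real.sqrt x),
    mul_nonneg (mul_nonneg (sq_nonneg (Real.sqrt (x+1) - Real.sqrt x)) hb0.le)
      (sub_nonneg.2 hab)]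

lemma log_mono_nat (m : ℕ) : Real.log m ≤ Real.log (m+1) := by
  rcases Nat.eq_zero_or_pos m with h | h
  · subst h; simp
  · exact Real.log_le_log (by exact_mod_cast h) (by push_cast; linarith)

lemma sqdiff_sum (n : ℕ) :
    ∑ k ∈ Finset.range n, (Real.sqrt (k+1) - Real.sqrt k)^2 ≤ 5/4 + Real.log n / 4 := by
  cases n with
  | zero => simp; positivity
  | succ m =>
    rw [Finset.sum_range_succ']
    have h0 : (Real.sqrt ((0:ℕ)+1) - Real.sqrt (0:ℕ))^2 = 1 := by norm_num
    have hterm : ∀ k ∈ Finset.range m,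
        (Real.sqrt ((k:ℝ)+1+1) - Real.sqrt ((k:ℝ)+1))^2 ≤ (1/4) * (1/((k:ℝ)+1)) := by
      intro k _
      have := sqrt_diff_sq_le ((k:ℝ)+1) (by positivity)
      calc (Real.sqrt ((k:ℝ)+1+1) - Real.sqrt ((k:ℝ)+1))^2 ≤ 1/(4*((k:ℝ)+1)) := this
        _ = (1/4) * (1/((k:ℝ)+1)) := by
            have hk0 : ((k:ℝ)+1) ≠ 0 := by positivity
            field_simp
    have hsum : ∑ k ∈ Finset.range m, (Real.sqrt ((k:ℝ)+1+1) - Real.sqrt ((k:ℝ)+1))^2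
        ≤ (1/4) * ∑ k ∈ Finset.range m, (1/((k:ℝ)+1)) := by
      rw [Finset.mul_sum]
      apply Finset.sum_le_sum
      intro k hk
      exact hterm k hk
    have hh := harm_le m
    have hlog := log_mono_nat m
    have h0' : (Real.sqrt ((0:ℝ)+1) - Real.sqrt (0:ℝ))^2 = 1 := by norm_num
    push_cast
    rw [h0']
    linarith [hsum, hh, hlog]


lemma vec_decomp (n : ℕ) (b : Fin n → ℝ) (hb : ∀ i, 0 ≤ b i) :
    ∃ (lam : Fin n → ℝ) (S : Fin n → Finset (Fin n)),
      (∀ k, 0 ≤ lam k) ∧ (∀ k : Fin n, (S k).card = (k:ℕ) + 1) ∧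
      (∀ i, b i = ∑ k, lam k * (Real.sqrt ((k:ℕ)+1))⁻¹ * (if i ∈ S k then 1 else 0)) ∧
      ∑ k, lam k ≤ Real.sqrt (∑ i, (b i)^2) * Real.sqrt (5/4 + Real.log n / 4) := by
  classical
  set σ : Equiv.Perm (Fin n) := Tuple.sort b with hσ
  have hmono : Monotone (b ∘ σ) := Tuple.monotone_sort b
  set d : ℕ → ℝ := fun k => if h : k < n then b (σ ((⟨k, h⟩ : Fin n).rev)) else 0 with hd
  have hd_nonneg : ∀ k, 0 ≤ d k := by
    intro k; rw [hd]; dsimp only; split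
    · exact hb _
    · exact le_refl 0
  have hd_anti : ∀ {k l : ℕ}, k ≤ l → d l ≤ d k := by
    intro k l hkl
    rcases lt_or_ge l n with hl | hl
    · have hk : k < n := lt_of_le_of_lt hkl hl
      rw [hd]; dsimp only
      rw [dif_pos hl, dif_pos hk]
      exact hmono (Fin.rev_le_rev.2 (by exact hkl))
    · have : d l = 0 := by rw [hd]; exact dif_neg (not_lt.2 hl)
      rw [this]; exact hd_nonneg k
  have hdn : ∀ m, n ≤ m → d m = 0 := fun m hm => by rw [hd]; exact dif_neg (not_lt.2 hm)
  have hdval : ∀ k : Fin n, d (k : ℕ) = b (σ k.rev) := by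
    intro k; rw [hd]; dsimp only; rw [dif_pos k.isLt]
  set S : Fin n → Finset (Fin n) := fun k => Finset.image (fun j : Fin n => σ j.rev) (Finset.Iic k)
    with hS
  have hcard : ∀ k : Fin n, (S k).card = (k:ℕ) + 1 := by
    intro k
    rw [hS]; dsimp only
    have hinj : Function.Injective (fun j : Fin n => σ j.rev) := by
      intro x y h
      exact Fin.rev_injective (σ.injective h)
    rw [Finset.card_image_of_injective _ hinj, Fin.card_Iic]
  have hmem : ∀ (i k : Fin n), i ∈ S k ↔ (σ.symm i).rev ≤ k := by
    intro i k
    simp only [hS, Finset.mem_image, Finset.mem_Iic]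
    constructor
    · rintro ⟨j, hj, rfl⟩
      rwa [Equiv.symm_apply_apply, Fin.rev_rev]
    · intro h
      exact ⟨(σ.symm i).rev, h, by rw [Fin.rev_rev, Equiv.apply_symm_apply]⟩
  set lam : Fin n → ℝ := fun k => (d (k:ℕ) - d ((k:ℕ)+1)) * Real.sqrt ((k:ℕ)+1) with hlam
  have hlam_nonneg : ∀ k, 0 ≤ lam k := fun k =>
    mul_nonneg (sub_nonneg.2 (hd_anti (Nat.le_succ _))) (Real.sqrt_nonneg _)
  have htel : ∀ (j m : ℕ), j ≤ m → ∑ k ∈ Finset.Ico j m, (d k - d (k+1)) = d j - d m := by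
    intro j m hm
    induction m, hm using Nat.le_induction with
    | base => simp
    | succ m hm ih =>
      rw [Finset.sum_Ico_succ_top hm, ih]; ring
  refine ⟨lam, S, hlam_nonneg, hcard, ?_, ?_⟩
  · -- reconstruction
    intro i
    symm
    have hterm : ∀ k : Fin n,
        lam k * (Real.sqrt ((k:ℕ)+1))⁻¹ * (if i ∈ S k then 1 else 0)
          = (d (k:ℕ) - d ((k:ℕ)+1)) * (if ((σ.symm i).rev : ℕ) ≤ (k:ℕ) then 1 else 0) := by
      intro k
      have hs : Real.sqrt ((k:ℕ)+1) ≠ 0 := by positivity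
      have h2 : (i ∈ S k) ↔ (((σ.symm i).rev : ℕ) ≤ (k:ℕ)) := by
        rw [hmem i k, Fin.le_def]
      rw [hlam]; dsimp only
      by_cases h : i ∈ S k
      · rw [if_pos h, if_pos (h2.1 h), mul_one, mul_one, mul_assoc, mul_inv_cancel₀ hs, mul_one]
      · rw [if_neg h, if_neg (fun hh => h (h2.2 hh)), mul_zero, mul_zero]
    rw [Finset.sum_congr rfl (fun k _ => hterm k)]
    set j : Fin n := (σ.symm i).rev with hj
    rw [Fin.sum_univ_eq_sum_range (fun k => (d k - d (k+1)) * (if (j:ℕ) ≤ k then 1 else 0)) n]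
    have hfilter : (Finset.range n).filter (fun k => (j:ℕ) ≤ k) = Finset.Ico (j:ℕ) n := by
      ext k; simp [Finset.mem_Ico, and_comm]
    calc ∑ k ∈ Finset.range n, (d k - d (k+1)) * (if (j:ℕ) ≤ k then 1 else 0)
        = ∑ k ∈ (Finset.range n).filter (fun k => (j:ℕ) ≤ k), (d k - d (k+1)) := by
          rw [Finset.sum_filter]
          exact Finset.sum_congr rfl (fun k _ => by split <;> simp
)
      _ = d (j:ℕ) - d n := by rw [hfilter, htel _ _ (le_of_lt j.isLt)]
      _ = b i := by
          rw [hdn n le_rfl, sub_zero, hdval j, hj, Fin.rev_rev, Equiv.apply_symm_apply]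
  · -- weight bound
    have h1 : ∑ k, lam k
        = ∑ k ∈ Finset.range n, (d k - d (k+1)) * Real.sqrt (k+1) := by
      rw [hlam]
      exact Fin.sum_univ_eq_sum_range (fun k => (d k - d (k+1)) * Real.sqrt (k+1)) n
    have habel : ∑ k ∈ Finset.range n, (d k - d (k+1)) * Real.sqrt (k+1)
        = ∑ k ∈ Finset.range n, d k * (Real.sqrt (k+1) - Real.sqrt k) := by
      rw [← sub_eq_zero, ← Finset.sum_sub_distrib]
      have : ∀ k : ℕ, (d k - d (k+1)) * Real.sqrt (k+1) - d k * (Real.sqrt (k+1) - Real.sqrt k)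
          = d k * Real.sqrt (k:ℕ) - d (k+1) * Real.sqrt ((k+1 : ℕ)) := by
        intro k; push_cast; ring
      rw [Finset.sum_congr rfl (fun k _ => this k),
        Finset.sum_range_sub' (fun k => d k * Real.sqrt (k:ℕ))]
      rw [hdn n le_rfl]
      simp
    have hcs := Real.sum_mul_le_sqrt_mul_sqrt (Finset.range n)
      (fun k => d k) (fun k => Real.sqrt (k+1) - Real.sqrt k)
    have hdsum : ∑ k ∈ Finset.range n, d k ^ 2 = ∑ i, b i ^ 2 := by
      rw [← Fin.sum_univ_eq_sum_range (fun k => d k ^ 2) n]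
      rw [Finset.sum_congr rfl (fun k _ => by rw [hdval k])]
      exact Equiv.sum_comp (Fin.revPerm.trans σ) (fun i => b i ^ 2)
    have hfinal : Real.sqrt (∑ k ∈ Finset.range n, (Real.sqrt (k+1) - Real.sqrt k)^2)
        ≤ Real.sqrt (5/4 + Real.log n / 4) := Real.sqrt_le_sqrt (sqdiff_sum n)
    rw [h1, habel]
    calc ∑ k ∈ Finset.range n, d k * (Real.sqrt (k+1) - Real.sqrt k)
        ≤ Real.sqrt (∑ k ∈ Finset.range n, d k ^ 2) *
            Real.sqrt (∑ k ∈ Finset.range n, (Real.sqrt (k+1) - Real.sqrt k)^2) := hcs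
      _ ≤ Real.sqrt (∑ i, b i ^ 2) * Real.sqrt (5/4 + Real.log n / 4) := by
          rw [hdsum]
          exact mul_le_mul_of_nonneg_left hfinal (Real.sqrt_nonneg _)


lemma matrix_part (N : ℕ) (U : Matrix (Fin N) (Fin N) ℂ)
    (h1 : star U * U = 1) (h2 : U * star U = 1)
    (b : Fin N → ℝ) (hb : ∀ i, 0 ≤ b i) :
    ∃ (lam : Fin N → ℝ) (Y : Fin N → Matrix (Fin N) (Fin N) ℂ),
      (∀ k, 0 ≤ lam k) ∧ (∀ k, IsNormalizedProjector (Y k)) ∧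
      U * Matrix.diagonal (fun i => (b i : ℂ)) * star U = ∑ k, (lam k : ℂ) • Y k ∧
      ∑ k, lam k ≤ Real.sqrt (∑ i, (b i)^2) * Real.sqrt (5/4 + Real.log N / 4) := by
  classical
  obtain ⟨lam, S, hlam0, hcard, hrecon, hweight⟩ := vec_decomp N b hb
  set ind : Fin N → Fin N → ℂ := fun k i => if i ∈ S k then 1 else 0 with hind
  set P : Fin N → Matrix (Fin N) (Fin N) ℂ :=
    fun k => U * Matrix.diagonal (ind k) * star U with hP
  set Y : Fin N → Matrix (Fin N) (Fin N) ℂ :=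
    fun k => ((Real.sqrt ((k:ℕ)+1))⁻¹ : ℂ) • P k with hY
  have hDD : ∀ k, Matrix.diagonal (ind k) * Matrix.diagonal (ind k)
      = Matrix.diagonal (ind k) := by
    intro k
    rw [Matrix.diagonal_mul_diagonal]
    exact congrArg Matrix.diagonal (by
      funext i; by_cases h : i ∈ S k <;> simp [hind, h])
  have hPP : ∀ k, P k * P k = P k := by
    intro k
    rw [hP]; dsimp only
    calc U * Matrix.diagonal (ind k) * star U * (U * Matrix.diagonal (ind k) * star U)
        = U * (Matrix.diagonal (ind k) * ((star U * U) * (Matrix.diagonal (ind k) * star U))) := by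
          simp only [Matrix.mul_assoc]
      _ = U * Matrix.diagonal (ind k) * star U := by
          rw [h1, one_mul,
            ← Matrix.mul_assoc (Matrix.diagonal (ind k)) (Matrix.diagonal (ind k)) (star U),
            hDD k, ← Matrix.mul_assoc]
  have hherm : ∀ k, (P k).IsHermitian := by
    intro k
    have hd : (Matrix.diagonal (ind k))ᴴ = Matrix.diagonal (ind k) := by
      rw [Matrix.diagonal_conjTranspose]
      exact congrArg Matrix.diagonal (by
        funext i; by_cases h : i ∈ S k <;> simp [hind, h])
    unfold Matrix.IsHermitian
    rw [hP]; dsimp only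
    rw [Matrix.conjTranspose_mul, Matrix.conjTranspose_mul, hd,
      Matrix.star_eq_conjTranspose, Matrix.conjTranspose_conjTranspose, Matrix.mul_assoc]
  have hdetU : IsUnit U.det := by
    apply IsUnit.of_mul_eq_one (a := U.det) (star U).det
    rw [← Matrix.det_mul, h2, Matrix.det_one]
  have hdetsU : IsUnit (star U).det := by
    apply IsUnit.of_mul_eq_one (a := (star U).det) U.det
    rw [← Matrix.det_mul, h1, Matrix.det_one]
  have hrank : ∀ k, (P k).rank = (k:ℕ) + 1 := by
    intro k
    rw [hP]; dsimp only
    rw [Matrix.mul_assoc, Matrix.rank_mul_eq_right_of_isUnit_det U _ hdetU,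
      Matrix.rank_mul_eq_left_of_isUnit_det (star U) _ hdetsU,
      Matrix.rank_diagonal]
    rw [← hcard k]
    rw [← Fintype.card_coe (S k)]
    apply Fintype.card_congr
    apply Equiv.subtypeEquivRight
    intro i
    by_cases h : i ∈ S k <;> simp [hind, h]
  refine ⟨lam, Y, hlam0, ?_, ?_, hweight⟩
  · intro k
    refine ⟨P k, hherm k, hPP k, ?_, ?_⟩
    · rw [hrank k]; omega
    · rw [hY]; dsimp only
      rw [hrank k]
      norm_num
  · have hdiag : Matrix.diagonal (fun i => (b i : ℂ))
        = ∑ k, ((lam k : ℂ) * ((Real.sqrt ((k:ℕ)+1))⁻¹ : ℂ)) • Matrix.diagonal (ind k) := by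
      ext i j
      rw [Matrix.sum_apply]
      by_cases hij : i = j
      · subst hij
        simp only [Matrix.smul_apply, Matrix.diagonal_apply_eq, smul_eq_mul]
        have := congrArg (fun t : ℝ => (t : ℂ)) (hrecon i)
        push_cast at this
        rw [this]
        apply Finset.sum_congr rfl
        intro k _
        by_cases h : i ∈ S k <;> simp [hind, h]
      · simp only [Matrix.smul_apply, Matrix.diagonal_apply_ne _ hij, smul_eq_mul, mul_zero]
        simp
    rw [hdiag, Finset.mul_sum, Finset.sum_mul]
    apply Finset.sum_congr rfl
    intro k _
    simp only [hY, hP, Matrix.mul_smul, Matrix.smul_mul, smul_smul]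


/-- Any Hermitian `N × N` matrix (`N > 1`) with Frobenius norm at most 1
is a linear combination of normalized projectors with total weight at most `4 √(ln N)`. -/
theorem hermitian_decomposition_into_normalized_projectors
    (N : ℕ) (hN : 1 < N) (X : Matrix (Fin N) (Fin N) ℂ)
    (hX : X.IsHermitian) (hfrob : frobNorm X ≤ 1) :
    ∃ (m : ℕ) (lam : Fin m → ℝ) (Xx : Fin m → Matrix (Fin N) (Fin N) ℂ),
      (∀ x, IsNormalizedProjector (Xx x)) ∧
      X = ∑ x, ((lam x : ℂ)) • Xx x ∧
      ∑ x, |lam x| ≤ 4 * Real.sqrt (Real.log N) := by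
  classical
  set a : Fin N → ℝ := hX.eigenvalues with ha
  set U : Matrix (Fin N) (Fin N) ℂ := (hX.eigenvectorUnitary : Matrix (Fin N) (Fin N) ℂ)
    with hU
  obtain ⟨h1, h2⟩ := Unitary.mem_iff.mp hX.eigenvectorUnitary.2
  have hspec : X = U * Matrix.diagonal (fun i => (a i : ℂ)) * star U := by
    have := hX.spectral_theorem
    rw [Unitary.conjStarAlgAut_apply] at this
    exact this
  -- trace identity
  have hXX : X * Xᴴ = U * Matrix.diagonal (fun i => ((a i : ℂ))^2) * star U := by
    rw [hX.eq]
    rw [hspec]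
    calc U * Matrix.diagonal (fun i => (a i : ℂ)) * star U *
          (U * Matrix.diagonal (fun i => (a i : ℂ)) * star U)
        = U * (Matrix.diagonal (fun i => (a i : ℂ)) *
            ((star U * U) * (Matrix.diagonal (fun i => (a i : ℂ)) * star U))) := by
          simp only [Matrix.mul_assoc]
      _ = U * Matrix.diagonal (fun i => ((a i : ℂ))^2) * star U := by
          rw [h1, one_mul,
            ← Matrix.mul_assoc (Matrix.diagonal _) (Matrix.diagonal _) (star U),
            Matrix.diagonal_mul_diagonal, ← Matrix.mul_assoc]
          congr 2
          funext i
          ring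
  have htrace : (X * Xᴴ).trace.re = ∑ i, a i ^ 2 := by
    rw [hXX]
    rw [Matrix.mul_assoc, Matrix.trace_mul_comm, Matrix.mul_assoc, h1, Matrix.mul_one]
    rw [Matrix.trace_diagonal]
    have : ∑ i, ((a i : ℂ))^2 = ((∑ i, a i ^ 2 : ℝ) : ℂ) := by push_cast; rfl
    rw [this, Complex.ofReal_re]
  have hsum2 : ∑ i, a i ^ 2 ≤ 1 := by
    have h0 : 0 ≤ ∑ i, a i ^ 2 := Finset.sum_nonneg fun i _ => sq_nonneg _
    have := hfrob
    unfold frobNorm at this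
    rw [htrace] at this
    nlinarith [Real.sq_sqrt h0, Real.sqrt_nonneg (∑ i, a i ^ 2)]
  -- positive and negative parts
  set b : Fin N → ℝ := fun i => max (a i) 0 with hbdef
  set c : Fin N → ℝ := fun i => max (-(a i)) 0 with hcdef
  have hb0 : ∀ i, 0 ≤ b i := fun i => le_max_right _ _
  have hc0 : ∀ i, 0 ≤ c i := fun i => le_max_right _ _
  have habc : ∀ i, a i = b i - c i := by
    intro i
    rcases le_total (a i) 0 with h | h
    · rw [hbdef, hcdef]; dsimp only
      rw [max_eq_right h, max_eq_left (by linarith)]; ring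
    · rw [hbdef, hcdef]; dsimp only
      rw [max_eq_left h, max_eq_right (by linarith)]; ring
  have hbc2 : ∀ i, b i ^ 2 + c i ^ 2 = a i ^ 2 := by
    intro i
    rcases le_total (a i) 0 with h | h
    · rw [hbdef, hcdef]; dsimp only
      rw [max_eq_right h, max_eq_left (by linarith)]; ring
    · rw [hbdef, hcdef]; dsimp only
      rw [max_eq_left h, max_eq_right (by linarith)]; ring
  have hsplit : ∑ i, b i ^ 2 + ∑ i, c i ^ 2 ≤ 1 := by
    rw [← Finset.sum_add_distrib]
    calc ∑ i, (b i ^ 2 + c i ^ 2) = ∑ i, a i ^ 2 :=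
          Finset.sum_congr rfl fun i _ => hbc2 i
      _ ≤ 1 := hsum2
  obtain ⟨lamb, Yb, hlamb0, hYbproj, hYbeq, hYbw⟩ := matrix_part N U h1 h2 b hb0
  obtain ⟨lamc, Yc, hlamc0, hYcproj, hYceq, hYcw⟩ := matrix_part N U h1 h2 c hc0
  have hXeq : X = (∑ k, (lamb k : ℂ) • Yb k) - (∑ k, (lamc k : ℂ) • Yc k) := by
    rw [← hYbeq, ← hYceq, hspec]
    have hdiag : Matrix.diagonal (fun i => (a i : ℂ))
        = Matrix.diagonal (fun i => (b i : ℂ)) - Matrix.diagonal (fun i => (c i : ℂ)) := by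
      rw [Matrix.diagonal_sub]
      exact congrArg Matrix.diagonal (by
        funext i
        have := habc i
        push_cast
        exact_mod_cast congrArg (fun t : ℝ => (t : ℂ)) this)
    rw [hdiag, Matrix.mul_sub, Matrix.sub_mul]
  -- assemble
  refine ⟨N + N, Fin.addCases lamb (fun k => -(lamc k)),
    Fin.addCases Yb Yc, ?_, ?_, ?_⟩
  · intro x
    refine Fin.addCases (fun i => ?_) (fun i => ?_) x
    · simpa using hYbproj i
    · simpa [-Fin.natAdd_eq_addNat] using hYcproj i
  · rw [Fin.sum_univ_add]
    simp only [Fin.addCases_left, Fin.addCases_right]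
    rw [hXeq, sub_eq_add_neg]
    congr 1
    rw [← Finset.sum_neg_distrib]
    apply Finset.sum_congr rfl
    intro k _
    push_cast
    rw [neg_smul]
  · rw [Fin.sum_univ_add]
    simp only [Fin.addCases_left, Fin.addCases_right, abs_neg]
    have hab : ∀ k, |lamb k| = lamb k := fun k => abs_of_nonneg (hlamb0 k)
    have hac : ∀ k, |lamc k| = lamc k := fun k => abs_of_nonneg (hlamc0 k)
    rw [Finset.sum_congr rfl (fun k _ => hab k), Finset.sum_congr rfl (fun k _ => hac k)]
    -- numeric bound
    set L : ℝ := Real.log N with hL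
    have hL2 : Real.log 2 ≤ L := Real.log_le_log (by norm_num) (by exact_mod_cast hN)
    have hLpos : (0.6931471803 : ℝ) < L := lt_of_lt_of_le Real.log_two_gt_d9 hL2
    set s : ℝ := Real.sqrt (5/4 + L/4) with hs
    have hs0 : 0 ≤ s := Real.sqrt_nonneg _
    have hsb0 : 0 ≤ ∑ i, b i ^ 2 := Finset.sum_nonneg fun i _ => sq_nonneg _
    have hsc0 : 0 ≤ ∑ i, c i ^ 2 := Finset.sum_nonneg fun i _ => sq_nonneg _
    have hroot : Real.sqrt (∑ i, b i ^ 2) + Real.sqrt (∑ i, c i ^ 2) ≤ Real.sqrt 2 := by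
      rw [Real.le_sqrt (by positivity) (by norm_num)]
      nlinarith [Real.sq_sqrt hsb0, Real.sq_sqrt hsc0, Real.sqrt_nonneg (∑ i, b i ^ 2),
        Real.sqrt_nonneg (∑ i, c i ^ 2), sq_nonneg (Real.sqrt (∑ i, b i ^ 2) - Real.sqrt (∑ i, c i ^ 2)),
        hsplit]
    have htot : ∑ k, lamb k + ∑ k, lamc k ≤ Real.sqrt 2 * s := by
      calc ∑ k, lamb k + ∑ k, lamc k
          ≤ Real.sqrt (∑ i, b i ^ 2) * s + Real.sqrt (∑ i, c i ^ 2) * s := by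
            exact add_le_add hYbw hYcw
        _ = (Real.sqrt (∑ i, b i ^ 2) + Real.sqrt (∑ i, c i ^ 2)) * s := by ring
        _ ≤ Real.sqrt 2 * s := mul_le_mul_of_nonneg_right hroot hs0
    have hfin : Real.sqrt 2 * s ≤ 4 * Real.sqrt L := by
      rw [hs, ← Real.sqrt_mul (by norm_num : (0:ℝ) ≤ 2)]
      have h16 : (4 : ℝ) * Real.sqrt L = Real.sqrt (16 * L) := by
        rw [Real.sqrt_mul (by norm_num : (0:ℝ) ≤ 16)]
        rw [show (16:ℝ) = 4^2 by norm_num, Real.sqrt_sq (by norm_num : (0:ℝ) ≤ 4)]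
      rw [h16]
      apply Real.sqrt_le_sqrt
      linarith
    linarith
end

section
/- Let g = (g_{ijk}) ∈ ℝ^{N³} be any fixed vector (not necessarily random) satisfying (i) ‖g‖₂² ≥ (1−δ)N³ and (ii) Σ_{j,k} g_{ijk}² ≤ (1+δ)N² for every i, and symmetrically for the j and k indices. Define T as the matrix |g⟩⟨g| with all entries having i=i', j=j' or k=k' set to zero. Then for sufficiently large N, ⟨g|T|g⟩ ≥ (1−3δ)·N³·‖g‖₂², and hence ‖T‖ ≥ (1−3δ)(1−δ)^{-1} N³ ≥ (1−6δ)N³ for small enough δ. -/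
open Matrix

/-- The operator (largest-singular-value) norm of a real matrix. -/
noncomputable def opNorm {m : Type*} [Fintype m] [DecidableEq m] (A : Matrix m m ℝ) : ℝ :=
  ‖Matrix.toEuclideanCLM (𝕜 := ℝ) A‖

/-- The matrix `T` built from the coefficients `g`: the rank-one matrix `|g⟩⟨g|` with all
entries having `i = i'`, `j = j'` or `k = k'` zeroed out. -/
def gameTensor {N : ℕ} (g : Fin N × Fin N × Fin N → ℝ) :
    Matrix (Fin N × Fin N × Fin N) (Fin N × Fin N × Fin N) ℝ :=
  fun p q =>
    if p.1 ≠ q.1 ∧ p.2.1 ≠ q.2.1 ∧ p.2.2 ≠ q.2.2 then g p * g q else 0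

section aux

lemma quad_le_opNorm' {ι : Type*} [Fintype ι] [DecidableEq ι] (A : Matrix ι ι ℝ) (g : ι → ℝ) :
    ∑ p, ∑ q, g p * A p q * g q ≤ ‖Matrix.toEuclideanCLM (𝕜 := ℝ) A‖ * ∑ p, (g p) ^ 2 := by
  set v : EuclideanSpace ℝ ι := (WithLp.equiv 2 _).symm g with hv
  have hvp : ∀ p, v p = g p := fun p => rfl
  have hTv : ∀ p, (Matrix.toEuclideanCLM (𝕜 := ℝ) A v) p = ∑ q, A p q * g q := by
    intro p
    have : Matrix.toEuclideanCLM (𝕜 := ℝ) A ((WithLp.equiv 2 _).symm g)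
        = (WithLp.equiv 2 _).symm (A *ᵥ g) := Matrix.toEuclideanCLM_toLp (𝕜 := ℝ) A g
    rw [← hv] at this
    rw [this]
    rfl
  have h1 : (inner ℝ v (Matrix.toEuclideanCLM (𝕜 := ℝ) A v) : ℝ)
      = ∑ p, ∑ q, g p * A p q * g q := by
    rw [PiLp.inner_apply]
    refine Finset.sum_congr rfl fun p _ => ?_
    rw [hTv, hvp, RCLike.inner_apply, starRingEnd_apply, star_trivial, Finset.sum_mul]
    exact Finset.sum_congr rfl fun q _ => by ring
  have h2 : ‖v‖ ^ 2 = ∑ p, (g p) ^ 2 := by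
    rw [← real_inner_self_eq_norm_sq, PiLp.inner_apply]
    exact Finset.sum_congr rfl fun p _ => by
      rw [RCLike.inner_apply, starRingEnd_apply, star_trivial, hvp, sq]
  calc ∑ p, ∑ q, g p * A p q * g q
      = (inner ℝ v (Matrix.toEuclideanCLM (𝕜 := ℝ) A v) : ℝ) := h1.symm
    _ ≤ ‖v‖ * ‖Matrix.toEuclideanCLM (𝕜 := ℝ) A v‖ := real_inner_le_norm _ _
    _ ≤ ‖v‖ * (‖Matrix.toEuclideanCLM (𝕜 := ℝ) A‖ * ‖v‖) :=
        mul_le_mul_of_nonneg_left ((Matrix.toEuclideanCLM (𝕜 := ℝ) A).le_opNorm v)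
          (norm_nonneg v)
    _ = ‖Matrix.toEuclideanCLM (𝕜 := ℝ) A‖ * ‖v‖ ^ 2 := by ring
    _ = _ := by rw [h2]

lemma slice_sq {ι κ : Type*} [Fintype ι] [Fintype κ] [DecidableEq κ] (π : ι → κ) (f : ι → ℝ) :
    ∑ p, ∑ q, (if π p = π q then f p * f q else 0)
      = ∑ a, (∑ p, if π p = a then f p else 0) ^ 2 := by
  set s : κ → ℝ := fun a => ∑ p, if π p = a then f p else 0 with hs
  calc ∑ p, ∑ q, (if π p = π q then f p * f q else 0)
      = ∑ p, f p * s (π p) := by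
        refine Finset.sum_congr rfl fun p _ => ?_
        rw [hs]
        simp only [Finset.mul_sum, mul_ite, mul_zero]
        refine Finset.sum_congr rfl fun q _ => ?_
        exact if_congr eq_comm rfl rfl
    _ = ∑ p, ∑ a, (if a = π p then f p * s a else 0) := by
        refine Finset.sum_congr rfl fun p _ => ?_
        rw [Finset.sum_ite_eq']
        simp
    _ = ∑ a, ∑ p, (if a = π p then f p * s a else 0) := Finset.sum_comm
    _ = ∑ a, s a * s a := by
        refine Finset.sum_congr rfl fun a _ => ?_
        rw [show (∑ p, if a = π p then f p * s a else 0)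
            = ∑ p, (if π p = a then f p else 0) * s a from
          Finset.sum_congr rfl fun p _ => by rw [ite_mul, zero_mul]
                                             exact if_congr eq_comm rfl rfl]
        rw [← Finset.sum_mul, hs]
    _ = ∑ a, s a ^ 2 := by simp [sq]

lemma sum_ite_pull {α M : Type*} [Fintype α] [AddCommMonoid M] (c : Prop) [Decidable c]
    (f : α → M) : (∑ x, if c then f x else 0) = if c then ∑ x, f x else 0 := by
  split <;> simp

lemma sliceA {N : ℕ} (g : Fin N × Fin N × Fin N → ℝ) (i : Fin N) :
    (∑ p : Fin N × Fin N × Fin N, if p.1 = i then g p ^ 2 else 0)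
      = ∑ j, ∑ k, g (i, j, k) ^ 2 := by
  rw [Fintype.sum_prod_type]
  simp only [Fintype.sum_prod_type]
  show (∑ x : Fin N, ∑ y : Fin N, ∑ z : Fin N, if x = i then g (x, y, z) ^ 2 else 0)
      = ∑ j : Fin N, ∑ k : Fin N, g (i, j, k) ^ 2
  simp only [sum_ite_pull]
  simp only [Finset.sum_ite_eq', Finset.mem_univ, if_true]

lemma sliceB {N : ℕ} (g : Fin N × Fin N × Fin N → ℝ) (j : Fin N) :
    (∑ p : Fin N × Fin N × Fin N, if p.2.1 = j then g p ^ 2 else 0)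
      = ∑ i, ∑ k, g (i, j, k) ^ 2 := by
  rw [Fintype.sum_prod_type]
  simp only [Fintype.sum_prod_type]
  show (∑ x : Fin N, ∑ y : Fin N, ∑ z : Fin N, if y = j then g (x, y, z) ^ 2 else 0)
      = ∑ i : Fin N, ∑ k : Fin N, g (i, j, k) ^ 2
  simp only [sum_ite_pull]
  simp only [Finset.sum_ite_eq', Finset.mem_univ, if_true]

lemma sliceC {N : ℕ} (g : Fin N × Fin N × Fin N → ℝ) (k : Fin N) :
    (∑ p : Fin N × Fin N × Fin N, if p.2.2 = k then g p ^ 2 else 0)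
      = ∑ i, ∑ j, g (i, j, k) ^ 2 := by
  rw [Fintype.sum_prod_type]
  simp only [Fintype.sum_prod_type]
  show (∑ x : Fin N, ∑ y : Fin N, ∑ z : Fin N, if z = k then g (x, y, z) ^ 2 else 0)
      = ∑ i : Fin N, ∑ j : Fin N, g (i, j, k) ^ 2
  simp only [Finset.sum_ite_eq', Finset.mem_univ, if_true]

lemma sumall {N : ℕ} (g : Fin N × Fin N × Fin N → ℝ) :
    (∑ p : Fin N × Fin N × Fin N, g p ^ 2) = ∑ i, ∑ j, ∑ k, g (i, j, k) ^ 2 := by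
  rw [Fintype.sum_prod_type]
  simp only [Fintype.sum_prod_type]

end aux

set_option maxHeartbeats 2000000 in
/-- For small enough `δ` and sufficiently large `N`, any vector
`g ∈ ℝ^{N³}` with `‖g‖₂² ≥ (1−δ)N³` and all index slices satisfying
`∑ g² ≤ (1+δ)N²` gives `⟨g|T|g⟩ ≥ (1−3δ) N³ ‖g‖₂²`, hence
`‖T‖ ≥ (1−3δ)(1−δ)⁻¹ N³ ≥ (1−6δ) N³`. -/
theorem deterministic_operator_norm_lower_bound :
    ∃ δ₀ : ℝ, 0 < δ₀ ∧ ∀ δ : ℝ, 0 < δ → δ ≤ δ₀ → ∃ N₀ : ℕ, ∀ N : ℕ, N₀ ≤ N →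
      ∀ g : Fin N × Fin N × Fin N → ℝ,
        ((1 - δ) * (N : ℝ) ^ 3 ≤ ∑ p, (g p) ^ 2) →
        (∀ i : Fin N, ∑ j, ∑ k, (g (i, j, k)) ^ 2 ≤ (1 + δ) * (N : ℝ) ^ 2) →
        (∀ j : Fin N, ∑ i, ∑ k, (g (i, j, k)) ^ 2 ≤ (1 + δ) * (N : ℝ) ^ 2) →
        (∀ k : Fin N, ∑ i, ∑ j, (g (i, j, k)) ^ 2 ≤ (1 + δ) * (N : ℝ) ^ 2) →
        ((1 - 3 * δ) * (N : ℝ) ^ 3 * (∑ p, (g p) ^ 2) ≤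
            ∑ p, ∑ q, g p * gameTensor g p q * g q) ∧
        (1 - 3 * δ) * (1 - δ)⁻¹ * (N : ℝ) ^ 3 ≤ opNorm (gameTensor g) ∧
        (1 - 6 * δ) * (N : ℝ) ^ 3 ≤ opNorm (gameTensor g) := by
  refine ⟨1/6, by norm_num, fun δ hδ hδ6 => ⟨⌈(3:ℝ)/δ⌉₊, fun N hN g hS hA hB hC => ?_⟩⟩
  set S : ℝ := ∑ p, (g p) ^ 2 with hSdef
  set Q : ℝ := ∑ p, ∑ q, g p * gameTensor g p q * g q with hQdef
  clear_value S Q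
  have hδN : 3 ≤ δ * N := by
    have h1 : (3:ℝ)/δ ≤ N := le_trans (Nat.le_ceil _) (by exact_mod_cast hN)
    calc (3:ℝ) = δ * (3/δ) := by field_simp
      _ ≤ δ * N := by gcongr
  have hN1 : (1:ℝ) ≤ N := by nlinarith
  have h1δ : (0:ℝ) < 1 - δ := by linarith
  have hN3 : (1:ℝ) ≤ (N:ℝ)^3 := one_le_pow₀ hN1
  have hSpos : 0 < S := by nlinarith
  -- the quadratic form as a sum of squares
  have hQform : Q
      = ∑ p, ∑ q, (if p.1 ≠ q.1 ∧ p.2.1 ≠ q.2.1 ∧ p.2.2 ≠ q.2.2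
          then g p ^ 2 * g q ^ 2 else 0) := by
    rw [hQdef]
    refine Finset.sum_congr rfl fun p _ => Finset.sum_congr rfl fun q _ => ?_
    unfold gameTensor
    split <;> ring
  -- the three diagonal sums
  have e1 : (∑ p : Fin N × Fin N × Fin N, ∑ q, (if p.1 = q.1 then g p ^ 2 * g q ^ 2 else 0))
      = ∑ i, (∑ j, ∑ k, g (i, j, k) ^ 2) ^ 2 := by
    refine Eq.trans (slice_sq (fun p => p.1) (fun p => g p ^ 2)) ?_
    exact Finset.sum_congr rfl fun i _ => by rw [sliceA]
  have e2 : (∑ p : Fin N × Fin N × Fin N, ∑ q, (if p.2.1 = q.2.1 then g p ^ 2 * g q ^ 2 else 0))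
      = ∑ j, (∑ i, ∑ k, g (i, j, k) ^ 2) ^ 2 := by
    refine Eq.trans (slice_sq (fun p => p.2.1) (fun p => g p ^ 2)) ?_
    exact Finset.sum_congr rfl fun j _ => by rw [sliceB]
  have e3 : (∑ p : Fin N × Fin N × Fin N, ∑ q, (if p.2.2 = q.2.2 then g p ^ 2 * g q ^ 2 else 0))
      = ∑ k, (∑ i, ∑ j, g (i, j, k) ^ 2) ^ 2 := by
    refine Eq.trans (slice_sq (fun p => p.2.2) (fun p => g p ^ 2)) ?_
    exact Finset.sum_congr rfl fun k _ => by rw [sliceC]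
  have etot : (∑ p : Fin N × Fin N × Fin N, ∑ q, g p ^ 2 * g q ^ 2) = S * S := by
    rw [hSdef, Finset.sum_mul_sum]
  -- pointwise inclusion-exclusion bound, summed
  have hkey : S * S - (∑ i, (∑ j, ∑ k, g (i, j, k) ^ 2) ^ 2)
      - (∑ j, (∑ i, ∑ k, g (i, j, k) ^ 2) ^ 2)
      - (∑ k, (∑ i, ∑ j, g (i, j, k) ^ 2) ^ 2)
      ≤ Q := by
    rw [hQform, ← etot, ← e1, ← e2, ← e3]
    rw [← Finset.sum_sub_distrib, ← Finset.sum_sub_distrib, ← Finset.sum_sub_distrib]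
    refine Finset.sum_le_sum fun p _ => ?_
    rw [← Finset.sum_sub_distrib, ← Finset.sum_sub_distrib, ← Finset.sum_sub_distrib]
    refine Finset.sum_le_sum fun q _ => ?_
    have hx : (0:ℝ) ≤ g p ^ 2 * g q ^ 2 := by positivity
    by_cases h1 : p.1 = q.1 <;> by_cases h2 : p.2.1 = q.2.1 <;> by_cases h3 : p.2.2 = q.2.2 <;>
      simp [h1, h2, h3] <;> linarith
  -- bounding the slice sums
  have hsliceTot : ∀ (F : Fin N → ℝ), (∀ i, 0 ≤ F i) → (∀ i, F i ≤ (1 + δ) * (N:ℝ)^2) →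
      (∑ i, F i ^ 2) ≤ (1 + δ) * (N:ℝ)^2 * (∑ i, F i) := by
    intro F h0 h1
    rw [Finset.mul_sum]
    exact Finset.sum_le_sum fun i _ => by nlinarith [h0 i, h1 i]
  have hAsum : (∑ i, ∑ j, ∑ k, g (i, j, k) ^ 2) = S := by rw [hSdef]; exact (sumall g).symm
  have hBsum : (∑ j : Fin N, ∑ i, ∑ k, g (i, j, k) ^ 2) = S := by
    rw [← hAsum, Finset.sum_comm]
  have hCsum : (∑ k : Fin N, ∑ i, ∑ j, g (i, j, k) ^ 2) = S := by
    rw [← hAsum]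
    rw [show (∑ k : Fin N, ∑ i, ∑ j, g (i, j, k) ^ 2)
        = ∑ i, ∑ k : Fin N, ∑ j, g (i, j, k) ^ 2 from Finset.sum_comm]
    exact Finset.sum_congr rfl fun i _ => Finset.sum_comm
  have hApos : ∀ i, (0:ℝ) ≤ ∑ j, ∑ k, g (i, j, k) ^ 2 := fun i =>
    Finset.sum_nonneg fun _ _ => Finset.sum_nonneg fun _ _ => sq_nonneg _
  have hBpos : ∀ j, (0:ℝ) ≤ ∑ i, ∑ k, g (i, j, k) ^ 2 := fun j =>
    Finset.sum_nonneg fun _ _ => Finset.sum_nonneg fun _ _ => sq_nonneg _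
  have hCpos : ∀ k, (0:ℝ) ≤ ∑ i, ∑ j, g (i, j, k) ^ 2 := fun k =>
    Finset.sum_nonneg fun _ _ => Finset.sum_nonneg fun _ _ => sq_nonneg _
  have hAb := hsliceTot _ hApos hA
  have hBb := hsliceTot _ hBpos hB
  have hCb := hsliceTot _ hCpos hC
  rw [hAsum] at hAb; rw [hBsum] at hBb; rw [hCsum] at hCb
  have hQ : S * (S - 3 * (1 + δ) * (N:ℝ)^2) ≤ Q := by
    nlinarith [hkey]
  have hNsq : (0:ℝ) ≤ (N:ℝ)^2 := by positivity
  have hgap : (1 - 3*δ) * (N:ℝ)^3 ≤ S - 3 * (1 + δ) * (N:ℝ)^2 := by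
    nlinarith [mul_nonneg (by linarith : (0:ℝ) ≤ δ * N - 3) hNsq]
  have part1 : (1 - 3 * δ) * (N : ℝ) ^ 3 * S ≤ Q := by
    nlinarith [hQ, hgap, hSpos]
  refine ⟨part1, ?_, ?_⟩
  · -- operator norm lower bound
    have hop : Q ≤ opNorm (gameTensor g) * S := by
      rw [hQdef, hSdef]; exact quad_le_opNorm' (gameTensor g) g
    have hT : S - 3 * (1 + δ) * (N:ℝ)^2 ≤ opNorm (gameTensor g) := by
      have := le_trans hQ hop
      nlinarith [hSpos]
    have hfin : (1 - 3 * δ) * (1 - δ)⁻¹ * (N : ℝ) ^ 3 ≤ S - 3 * (1 + δ) * (N:ℝ)^2 := by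
      rw [show (1 - 3 * δ) * (1 - δ)⁻¹ * (N : ℝ) ^ 3 = ((1 - 3 * δ) * (N : ℝ) ^ 3) / (1 - δ)
        by field_simp]
      rw [div_le_iff₀ h1δ]
      nlinarith [mul_nonneg (by linarith : (0:ℝ) ≤ δ * N - 3) hNsq, hS]
    linarith
  · -- the weaker bound
    have hop : Q ≤ opNorm (gameTensor g) * S := by
      rw [hQdef, hSdef]; exact quad_le_opNorm' (gameTensor g) g
    have hT : S - 3 * (1 + δ) * (N:ℝ)^2 ≤ opNorm (gameTensor g) := by
      have := le_trans hQ hop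
      nlinarith [hSpos]
    have hfin : (1 - 6 * δ) * (N : ℝ) ^ 3 ≤ S - 3 * (1 + δ) * (N:ℝ)^2 := by
      nlinarith [mul_nonneg (by linarith : (0:ℝ) ≤ δ * N - 3) hNsq, hS,
        mul_nonneg (mul_nonneg hδ.le hδ.le) (by positivity : (0:ℝ) ≤ (N:ℝ)^3)]
    linarith
end

section
/- For any 3-player XOR game G with at most Q possible questions to the third player, the entangled bias satisfies β*(G) ≤ √Q · K_G^ℝ · β(G), where K_G^ℝ is the real Grothendieck constant. -/
open Matrix
open Kronecker

/-- A `±1`-valued (classical) strategy. -/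
def IsSign {Q : ℕ} (χ : Fin Q → ℝ) : Prop := ∀ i, χ i = 1 ∨ χ i = -1

/-- A `±1`-valued observable: a Hermitian matrix squaring to the identity. -/
def IsObservable {d : ℕ} (A : Matrix (Fin d) (Fin d) ℂ) : Prop :=
  A.IsHermitian ∧ A * A = 1

section XorAuxSec
variable {n : Type*} [Fintype n] [DecidableEq n]

omit [DecidableEq n] in
lemma star_dot (M : Matrix n n ℂ) (u v : n → ℂ) :
    star (M.mulVec u) ⬝ᵥ v = star u ⬝ᵥ (Mᴴ.mulVec v) := by
  rw [Matrix.star_mulVec, Matrix.dotProduct_mulVec]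

lemma dot_unitary (U : Matrix n n ℂ) (hU : Uᴴ * U = 1) (u v : n → ℂ) :
    star (U.mulVec u) ⬝ᵥ (U.mulVec v) = star u ⬝ᵥ v := by
  rw [star_dot, Matrix.mulVec_mulVec, hU, Matrix.one_mulVec]

omit [DecidableEq n] in
lemma dot_self_real (u : n → ℂ) :
    star u ⬝ᵥ u = ((∑ l, Complex.normSq (u l) : ℝ) : ℂ) := by
  simp only [dotProduct, Pi.star_apply, Complex.ofReal_sum]
  refine Finset.sum_congr rfl fun l _ => ?_
  rw [Complex.star_def, ← Complex.normSq_eq_conj_mul_self]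

omit [Fintype n] [DecidableEq n] in
lemma kron_conjTranspose {l m : Type*} (A : Matrix n n ℂ) (B : Matrix l m ℂ) :
    (A ⊗ₖ B)ᴴ = Aᴴ ⊗ₖ Bᴴ := by
  ext i j
  simp [Matrix.conjTranspose_apply, star_mul']

/-- sign of a boolean -/
def sg (b : Bool) : ℝ := if b then 1 else -1

lemma sg_sign {Q : ℕ} (ε : Fin Q → Bool) : IsSign (fun k => sg (ε k)) := by
  intro k; by_cases h : ε k <;> simp [sg, h]

lemma sg_orth (Q : ℕ) (k k' : Fin Q) :
    ∑ ε : Fin Q → Bool, sg (ε k) * sg (ε k') = if k = k' then (2^Q : ℝ) else 0 := by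
  unfold sg
  rcases eq_or_ne k k' with rfl | h
  · simp only [if_pos rfl]
    have : ∀ ε : Fin Q → Bool,
        (if ε k then (1:ℝ) else -1) * (if ε k then (1:ℝ) else -1) = 1 := by
      intro ε; by_cases hb : ε k <;> simp [hb]
    rw [Finset.sum_congr rfl fun ε _ => this ε]
    simp [Finset.card_univ]
  · rw [if_neg h]
    have hinv : Function.Involutive
        (fun ε : Fin Q → Bool => Function.update ε k (!(ε k))) := by
      intro ε; funext x
      by_cases hx : x = k
      · subst hx; simp [Function.update]
      · simp [Function.update, hx]
    set e := Function.Involutive.toPerm _ hinv with he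
    have := Equiv.sum_comp e
      (fun ε : Fin Q → Bool => (if ε k then (1:ℝ) else -1) * (if ε k' then (1:ℝ) else -1))
    have hneg : ∀ ε : Fin Q → Bool,
        (if (e ε) k then (1:ℝ) else -1) * (if (e ε) k' then (1:ℝ) else -1)
          = - ((if ε k then (1:ℝ) else -1) * (if ε k' then (1:ℝ) else -1)) := by
      intro ε
      have h1 : (e ε) k = !(ε k) := by
        simp [he, Function.Involutive.coe_toPerm, Function.update]
      have h2 : (e ε) k' = ε k' := by
        simp [he, Function.Involutive.coe_toPerm, Function.update, (Ne.symm h)]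
      rw [h1, h2]
      by_cases hb : ε k <;> by_cases hb' : ε k' <;> simp [hb, hb']
    rw [Finset.sum_congr rfl fun ε _ => hneg ε] at this
    simp only [Finset.sum_neg_distrib] at this
    linarith

variable {d : ℕ}

/-- A acting on the first tensor slot. -/
def tA (A : Matrix (Fin d) (Fin d) ℂ) :
    Matrix (Fin d × Fin d × Fin d) (Fin d × Fin d × Fin d) ℂ :=
  A ⊗ₖ (1 : Matrix (Fin d × Fin d) (Fin d × Fin d) ℂ)

/-- B acting on the second tensor slot. -/
def tB (B : Matrix (Fin d) (Fin d) ℂ) :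
    Matrix (Fin d × Fin d × Fin d) (Fin d × Fin d × Fin d) ℂ :=
  (1 : Matrix (Fin d) (Fin d) ℂ) ⊗ₖ (B ⊗ₖ (1 : Matrix (Fin d) (Fin d) ℂ))

/-- C acting on the third tensor slot. -/
def tC (C : Matrix (Fin d) (Fin d) ℂ) :
    Matrix (Fin d × Fin d × Fin d) (Fin d × Fin d × Fin d) ℂ :=
  (1 : Matrix (Fin d) (Fin d) ℂ) ⊗ₖ ((1 : Matrix (Fin d) (Fin d) ℂ) ⊗ₖ C)

lemma tA_herm {A : Matrix (Fin d) (Fin d) ℂ} (h : A.IsHermitian) : (tA A)ᴴ = tA A := by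
  rw [tA, kron_conjTranspose, Matrix.conjTranspose_one, h.eq]

lemma tB_herm {B : Matrix (Fin d) (Fin d) ℂ} (h : B.IsHermitian) : (tB B)ᴴ = tB B := by
  rw [tB, kron_conjTranspose, kron_conjTranspose, Matrix.conjTranspose_one, h.eq]

lemma tC_herm {C : Matrix (Fin d) (Fin d) ℂ} (h : C.IsHermitian) : (tC C)ᴴ = tC C := by
  rw [tC, kron_conjTranspose, kron_conjTranspose, Matrix.conjTranspose_one, h.eq]

lemma tA_unit {A : Matrix (Fin d) (Fin d) ℂ} (h : IsObservable A) : (tA A)ᴴ * tA A = 1 := by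
  rw [tA_herm h.1, tA, ← Matrix.mul_kronecker_mul, h.2, Matrix.one_mul, Matrix.one_kronecker_one]

lemma tB_unit {B : Matrix (Fin d) (Fin d) ℂ} (h : IsObservable B) : (tB B)ᴴ * tB B = 1 := by
  rw [tB_herm h.1, tB, ← Matrix.mul_kronecker_mul, ← Matrix.mul_kronecker_mul, h.2,
    Matrix.one_mul, Matrix.one_kronecker_one, Matrix.one_kronecker_one]

lemma tC_unit {C : Matrix (Fin d) (Fin d) ℂ} (h : IsObservable C) : (tC C)ᴴ * tC C = 1 := by
  rw [tC_herm h.1, tC, ← Matrix.mul_kronecker_mul, ← Matrix.mul_kronecker_mul, h.2,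
    Matrix.one_mul, Matrix.one_kronecker_one, Matrix.one_kronecker_one]

lemma tBtC (B C : Matrix (Fin d) (Fin d) ℂ) : tB B * tC C = 1 ⊗ₖ (B ⊗ₖ C) := by
  rw [tB, tC, ← Matrix.mul_kronecker_mul, ← Matrix.mul_kronecker_mul]
  simp

lemma tAtBtC (A B C : Matrix (Fin d) (Fin d) ℂ) :
    tA A * (tB B * tC C) = A ⊗ₖ (B ⊗ₖ C) := by
  rw [tBtC, tA, ← Matrix.mul_kronecker_mul]
  simp

end XorAuxSec

section Part2Sec
variable {d Q : ℕ}

/-- swap an innermost sum to the outside -/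
lemma sum_swap_12_3 {M : Type*} [AddCommMonoid M] {ι κ γ : Type*} [Fintype ι] [Fintype κ] [Fintype γ]
    (f : ι → κ → γ → M) :
    ∑ p, ∑ q, ∑ k, f p q k = ∑ k, ∑ p, ∑ q, f p q k := by
  have h : ∀ p, ∑ q, ∑ k, f p q k = ∑ k, ∑ q, f p q k := fun p => Finset.sum_comm
  rw [Finset.sum_congr rfl fun p _ => h p]
  exact Finset.sum_comm

lemma sum_swap_1_23 {M : Type*} [AddCommMonoid M] {ι κ γ : Type*} [Fintype ι] [Fintype κ] [Fintype γ]
    (f : ι → κ → γ → M) :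
    ∑ p, ∑ k, ∑ k', f p k k' = ∑ k, ∑ k', ∑ p, f p k k' := by
  rw [Finset.sum_comm]
  exact Finset.sum_congr rfl fun k _ => Finset.sum_comm

/-- bilinearity of dotProduct through mulVec of a sum -/
lemma dot_mulVec_sum {n : Type*} [Fintype n] (xv : n → ℂ) (M : Matrix n n ℂ)
    (c : Fin Q → ℂ) (v : Fin Q → n → ℂ) :
    star xv ⬝ᵥ M.mulVec (fun p => ∑ k, c k * v k p)
      = ∑ k, c k * (star xv ⬝ᵥ M.mulVec (v k)) := by
  trans ∑ p, ∑ q, ∑ k, star (xv p) * (M p q * (c k * v k q))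
  · simp only [dotProduct, Matrix.mulVec, Pi.star_apply, Finset.mul_sum]
  rw [sum_swap_12_3]
  simp only [dotProduct, Matrix.mulVec, Pi.star_apply, Finset.mul_sum]
  refine Finset.sum_congr rfl fun k _ => Finset.sum_congr rfl fun p _ =>
    Finset.sum_congr rfl fun q _ => by ring

lemma dot_sum_sum {n : Type*} [Fintype n] (c : Fin Q → ℂ) (v : Fin Q → n → ℂ) :
    star (fun p => ∑ k, c k * v k p) ⬝ᵥ (fun p => ∑ k, c k * v k p)
      = ∑ k, ∑ k', star (c k) * c k' * (star (v k) ⬝ᵥ v k') := by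
  trans ∑ p, ∑ k, ∑ k', star (c k') * star (v k' p) * (c k * v k p)
  · simp only [dotProduct, Pi.star_apply, star_sum, star_mul', Finset.sum_mul,
      Finset.mul_sum]
  rw [sum_swap_1_23, Finset.sum_comm]
  simp only [dotProduct, Pi.star_apply, Finset.mul_sum]
  refine Finset.sum_congr rfl fun k _ => Finset.sum_congr rfl fun k' _ =>
    Finset.sum_congr rfl fun p _ => by ring

/-- the quantum correlation as an inner product -/
lemma key1 {d : ℕ} {A : Matrix (Fin d) (Fin d) ℂ} (hA : A.IsHermitian)
    (B C : Matrix (Fin d) (Fin d) ℂ) (ψ : Fin d × Fin d × Fin d → ℂ) :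
    star ((tA A).mulVec ψ) ⬝ᵥ (tB B).mulVec ((tC C).mulVec ψ)
      = ∑ p, ∑ q, (starRingEnd ℂ) (ψ p) *
          (A p.1 q.1 * B p.2.1 q.2.1 * C p.2.2 q.2.2) * ψ q := by
  rw [star_dot, tA_herm hA, Matrix.mulVec_mulVec, Matrix.mulVec_mulVec, Matrix.mul_assoc, tAtBtC]
  simp only [dotProduct, Matrix.mulVec, Pi.star_apply, kroneckerMap_apply,
    Finset.mul_sum, Complex.star_def]
  exact Finset.sum_congr rfl fun p _ => Finset.sum_congr rfl fun q _ => by ring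

lemma mulVec_normSq_eq {n : Type*} [Fintype n] [DecidableEq n] (U : Matrix n n ℂ)
    (hU : Uᴴ * U = 1) (u : n → ℂ) :
    ∑ l, Complex.normSq (U.mulVec u l) = ∑ l, Complex.normSq (u l) := by
  have h := dot_unitary U hU u u
  rw [dot_self_real, dot_self_real] at h
  exact_mod_cast h

end Part2Sec


/-- For any 3-player XOR game with at most `Q` questions per player
(given by the tensor `T`), the entangled bias is at most `√Q · K_G^ℝ` times the classical
bias, where `K_G^ℝ` is (any constant satisfying) the real Grothendieck constant. -/
theorem entangled_bias_le_sqrtQ_grothendieck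
    (Q : ℕ) (T : Fin Q → Fin Q → Fin Q → ℝ) (K : ℝ)
    -- `K` satisfies Grothendieck's inequality: for any real matrix `M`, complex unit
    -- vectors `x i`, `y j`, and any upper bound `c` on the classical bilinear bias of `M`,
    -- `|∑ M i j ⟨x i, y j⟩| ≤ K c`.
    (hK : ∀ (d : ℕ) (M : Fin Q → Fin Q → ℝ) (x y : Fin Q → Fin d → ℂ),
      (∀ i, (∑ l, Complex.normSq (x i l)) = 1) →
      (∀ j, (∑ l, Complex.normSq (y j l)) = 1) →
      ∀ c : ℝ, (∀ χ υ : Fin Q → ℝ, IsSign χ → IsSign υ →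
          |∑ i, ∑ j, M i j * χ i * υ j| ≤ c) →
        ‖∑ i, ∑ j, (M i j : ℂ) *
          ∑ l, (starRingEnd ℂ) (x i l) * y j l‖ ≤ K * c)
    (β : ℝ)
    -- `β` is (an upper bound on) the classical bias of the game.
    (hβ : ∀ χ υ ζ : Fin Q → ℝ, IsSign χ → IsSign υ → IsSign ζ →
      ∑ i, ∑ j, ∑ k, T i j k * χ i * υ j * ζ k ≤ β) :
    -- Conclusion: every entangled strategy achieves bias at most `√Q · K · β`.
    ∀ (d : ℕ) (ψ : Fin d × Fin d × Fin d → ℂ),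
      (∑ p, Complex.normSq (ψ p)) = 1 →
      ∀ A B C : Fin Q → Matrix (Fin d) (Fin d) ℂ,
        (∀ i, IsObservable (A i)) → (∀ j, IsObservable (B j)) →
        (∀ k, IsObservable (C k)) →
        (∑ i, ∑ j, ∑ k, T i j k *
          (∑ p, ∑ q, (starRingEnd ℂ) (ψ p) *
            (A i p.1 q.1 * B j p.2.1 q.2.1 * C k p.2.2 q.2.2) * ψ q).re) ≤
          Real.sqrt Q * K * β := by
  intro d ψ hψ A B C hA hB hC
  classical
  rcases Nat.eq_zero_or_pos Q with hQ0 | hQ0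
  · subst hQ0
    simp
  -- β is nonnegative
  have hsign1 : IsSign (fun _ : Fin Q => (1:ℝ)) := fun _ => Or.inl rfl
  have hsignm : IsSign (fun _ : Fin Q => (-1:ℝ)) := fun _ => Or.inr rfl
  have hβ0 : 0 ≤ β := by
    have h1 := hβ _ _ _ hsign1 hsign1 hsign1
    have h2 := hβ _ _ _ hsignm hsign1 hsign1
    simp only [mul_one] at h1
    have e2 : ∑ i, ∑ j, ∑ k, T i j k * (-1) * 1 * 1 = -∑ i, ∑ j, ∑ k, T i j k := by
      simp [Finset.sum_neg_distrib]
    rw [e2] at h2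
    linarith
  -- K is at least 1
  have hK1 : (1:ℝ) ≤ K := by
    set i0 : Fin Q := ⟨0, hQ0⟩
    set M : Fin Q → Fin Q → ℝ := fun i j => if i = i0 ∧ j = i0 then 1 else 0 with hM
    have hMsum : ∀ (χ υ : Fin Q → ℝ), ∑ i, ∑ j, M i j * χ i * υ j = χ i0 * υ i0 := by
      intro χ υ
      have hterm : ∀ i j, M i j * χ i * υ j
          = if i = i0 then (if j = i0 then χ i0 * υ i0 else 0) else 0 := by
        intro i j
        by_cases h1 : i = i0 <;> by_cases h2 : j = i0 <;> simp [hM, h1, h2]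
      simp [Finset.sum_congr rfl fun i _ => Finset.sum_congr rfl fun j _ => hterm i j]
    have h := hK 1 M (fun _ _ => 1) (fun _ _ => 1) (by simp) (by simp) 1 ?_
    · have hinner : ∀ i j : Fin Q, (∑ l : Fin 1, (starRingEnd ℂ) 1 * 1) = (1:ℂ) := by simp
      have : (∑ i, ∑ j, (M i j : ℂ) * ∑ l : Fin 1, (starRingEnd ℂ) 1 * 1) = 1 := by
        simp only [hinner i0 i0, mul_one]
        have : ∀ i j, ((M i j : ℝ) : ℂ)
            = if i = i0 then (if j = i0 then 1 else 0) else 0 := by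
          intro i j
          by_cases h1 : i = i0 <;> by_cases h2 : j = i0 <;> simp [hM, h1, h2]
        simp [Finset.sum_congr rfl fun i _ => Finset.sum_congr rfl fun j _ => this i j]
      rw [this] at h
      simpa using h
    · intro χ υ hχ hυ
      rw [hMsum χ υ]
      rcases hχ i0 with h1 | h1 <;> rcases hυ i0 with h2 | h2 <;> simp [h1, h2]
  have hKβ : 0 ≤ K * β := mul_nonneg (le_trans zero_le_one hK1) hβ0
  -- the vectors
  set xv : Fin Q → (Fin d × Fin d × Fin d) → ℂ := fun i => (tA (A i)).mulVec ψ with hxv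
  set wv : Fin Q → (Fin d × Fin d × Fin d) → ℂ := fun k => (tC (C k)).mulVec ψ with hwv
  set R : Fin Q → Fin Q → Fin Q → ℂ :=
    fun i j k => star (xv i) ⬝ᵥ (tB (B j)).mulVec (wv k) with hRdef
  set Φ : (Fin Q → Bool) → (Fin d × Fin d × Fin d) → ℂ :=
    fun ε p => ∑ k, ((sg (ε k) : ℝ) : ℂ) * wv k p with hΦ
  set ν : (Fin Q → Bool) → ℝ := fun ε => ∑ p, Complex.normSq (Φ ε p) with hν
  set Ye : (Fin Q → Bool) → Fin Q → (Fin d × Fin d × Fin d) → ℂ :=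
    fun ε j => (tB (B j)).mulVec (Φ ε) with hYe
  set F : (Fin Q → Bool) → ℝ :=
    fun ε => ∑ i, ∑ j, (∑ k, sg (ε k) * T i j k) * (star (xv i) ⬝ᵥ Ye ε j).re with hF
  -- norms
  have hxv_norm : ∀ i, ∑ p, Complex.normSq (xv i p) = 1 := by
    intro i; rw [hxv]; rw [mulVec_normSq_eq _ (tA_unit (hA i))]; exact hψ
  have hwv_norm : ∀ k, ∑ p, Complex.normSq (wv k p) = 1 := by
    intro k; rw [hwv]; rw [mulVec_normSq_eq _ (tC_unit (hC k))]; exact hψ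
  have hYe_norm : ∀ ε j, ∑ p, Complex.normSq (Ye ε j p) = ν ε := by
    intro ε j; rw [hYe]; rw [mulVec_normSq_eq _ (tB_unit (hB j))]
  have hν_nonneg : ∀ ε, 0 ≤ ν ε :=
    fun ε => Finset.sum_nonneg fun p _ => Complex.normSq_nonneg _
  have hYe_dot : ∀ ε i j, star (xv i) ⬝ᵥ Ye ε j = ∑ k, ((sg (ε k) : ℝ) : ℂ) * R i j k := by
    intro ε i j
    rw [hYe, hΦ]
    exact dot_mulVec_sum (xv i) (tB (B j)) _ _
  -- total square norm of the Φ's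
  have hν_sum : ∑ ε, ν ε = 2^Q * Q := by
    have hcast : ∀ ε, ((ν ε : ℝ) : ℂ) = star (Φ ε) ⬝ᵥ Φ ε := by
      intro ε; rw [hν]; rw [dot_self_real]
    have step : ∀ ε, star (Φ ε) ⬝ᵥ Φ ε
        = ∑ k, ∑ k', ((sg (ε k) * sg (ε k') : ℝ) : ℂ) * (star (wv k) ⬝ᵥ wv k') := by
      intro ε
      rw [hΦ, dot_sum_sum]
      refine Finset.sum_congr rfl fun k _ => Finset.sum_congr rfl fun k' _ => ?_
      rw [Complex.star_def, Complex.conj_ofReal]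
      push_cast
      ring
    have : ((∑ ε, ν ε : ℝ) : ℂ) = ((2^Q * Q : ℝ) : ℂ) := by
      rw [Complex.ofReal_sum, Finset.sum_congr rfl fun ε _ => hcast ε]
      calc ∑ ε : (Fin Q → Bool), star (Φ ε) ⬝ᵥ Φ ε
          = ∑ ε : (Fin Q → Bool), ∑ k, ∑ k',
              ((sg (ε k) * sg (ε k') : ℝ) : ℂ) * (star (wv k) ⬝ᵥ wv k') := by
            exact Finset.sum_congr rfl fun ε _ => step ε
        _ = ∑ k, ∑ k', ∑ ε : (Fin Q → Bool),
              ((sg (ε k) * sg (ε k') : ℝ) : ℂ) * (star (wv k) ⬝ᵥ wv k') := by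
            exact sum_swap_1_23 _
        _ = ∑ k, ∑ k', (((if k = k' then (2^Q : ℝ) else 0) : ℝ) : ℂ) * (star (wv k) ⬝ᵥ wv k') := by
            refine Finset.sum_congr rfl fun k _ => Finset.sum_congr rfl fun k' _ => ?_
            rw [← Finset.sum_mul, ← sg_orth Q k k']
            push_cast
            ring
        _ = ∑ k : Fin Q, ((2^Q : ℝ) : ℂ) * (star (wv k) ⬝ᵥ wv k) := by
            refine Finset.sum_congr rfl fun k _ => ?_
            simp only [apply_ite (fun r : ℝ => (r : ℂ)), Complex.ofReal_zero, ite_mul, zero_mul]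
            rw [Finset.sum_ite_eq]
            simp
        _ = ((2^Q * Q : ℝ) : ℂ) := by
            have hwone : ∀ k : Fin Q, star (wv k) ⬝ᵥ wv k = ((1:ℝ) : ℂ) := by
              intro k; rw [dot_self_real, hwv_norm k]
            simp only [hwone, Complex.ofReal_one, mul_one, Finset.sum_const,
              Finset.card_univ, Fintype.card_fin, nsmul_eq_mul]
            push_cast
            ring
    exact_mod_cast this
  -- Claim A : averaging over sign vectors recovers the quantum bias
  have hre : ∀ (ε : Fin Q → Bool) (i j : Fin Q),
      (star (xv i) ⬝ᵥ Ye ε j).re = ∑ k, sg (ε k) * (R i j k).re := by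
    intro ε i j
    rw [hYe_dot ε i j, Complex.re_sum]
    exact Finset.sum_congr rfl fun k _ => Complex.re_ofReal_mul _ _
  have hFexp : ∀ ε : Fin Q → Bool, F ε
      = ∑ i, ∑ j, ∑ k, ∑ k', (sg (ε k) * sg (ε k')) * (T i j k * (R i j k').re) := by
    intro ε
    rw [hF]
    refine Finset.sum_congr rfl fun i _ => Finset.sum_congr rfl fun j _ => ?_
    rw [hre ε i j, Finset.sum_mul_sum]
    exact Finset.sum_congr rfl fun k _ => Finset.sum_congr rfl fun k' _ => by ring
  have claimA : ∑ ε : (Fin Q → Bool), F ε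
      = 2^Q * (∑ i, ∑ j, ∑ k, T i j k * (R i j k).re) := by
    calc ∑ ε : (Fin Q → Bool), F ε
        = ∑ i, ∑ j, ∑ k, ∑ k', (∑ ε : (Fin Q → Bool), sg (ε k) * sg (ε k'))
            * (T i j k * (R i j k').re) := by
          rw [Finset.sum_congr rfl fun ε _ => hFexp ε]
          rw [Finset.sum_comm]
          refine Finset.sum_congr rfl fun i _ => ?_
          rw [Finset.sum_comm]
          refine Finset.sum_congr rfl fun j _ => ?_
          rw [sum_swap_1_23]
          refine Finset.sum_congr rfl fun k _ => Finset.sum_congr rfl fun k' _ => ?_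
          rw [Finset.sum_mul]
      _ = ∑ i, ∑ j, ∑ k, (2^Q : ℝ) * (T i j k * (R i j k).re) := by
          refine Finset.sum_congr rfl fun i _ => Finset.sum_congr rfl fun j _ =>
            Finset.sum_congr rfl fun k _ => ?_
          rw [Finset.sum_congr rfl fun k' (_ : k' ∈ Finset.univ) => by rw [sg_orth Q k k']]
          simp only [ite_mul, zero_mul]
          rw [Finset.sum_ite_eq]
          simp
      _ = 2^Q * (∑ i, ∑ j, ∑ k, T i j k * (R i j k).re) := by
          simp [Finset.mul_sum]
  -- Claim B : Grothendieck bound for each sign vector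
  have claimB : ∀ ε : Fin Q → Bool, F ε ≤ Real.sqrt (ν ε) * (K * β) := by
    intro ε
    by_cases h0 : ν ε = 0
    · have h0' : ∑ p, Complex.normSq (Φ ε p) = 0 := by rw [hν] at h0; exact h0
      have hzero : ∀ p, Φ ε p = 0 := by
        intro p
        have := (Finset.sum_eq_zero_iff_of_nonneg
          (fun p _ => Complex.normSq_nonneg (Φ ε p))).mp h0' p (Finset.mem_univ p)
        exact Complex.normSq_eq_zero.mp this
      have hY0 : ∀ j, Ye ε j = 0 := by
        intro j
        rw [hYe]
        dsimp only
        have : Φ ε = 0 := funext hzero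
        rw [this]
        exact Matrix.mulVec_zero _
      have hF0 : F ε = 0 := by
        rw [hF]
        refine Finset.sum_eq_zero fun i _ => Finset.sum_eq_zero fun j _ => ?_
        rw [hY0 j]
        simp
      rw [hF0, h0, Real.sqrt_zero, zero_mul]
    · have hνpos : 0 < ν ε := lt_of_le_of_ne (hν_nonneg ε) (Ne.symm h0)
      have hρpos : 0 < Real.sqrt (ν ε) := Real.sqrt_pos.mpr hνpos
      set ρ : ℝ := Real.sqrt (ν ε) with hρ
      have hρsq : ρ * ρ = ν ε := Real.mul_self_sqrt (hν_nonneg ε)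
      let e : (Fin d × Fin d × Fin d) ≃ Fin (d * (d * d)) :=
        (Equiv.prodCongr (Equiv.refl (Fin d)) finProdFinEquiv).trans finProdFinEquiv
      have happ := hK (d * (d * d)) (fun i j => ∑ k, sg (ε k) * T i j k)
        (fun i l => xv i (e.symm l))
        (fun j l => ((ρ⁻¹ : ℝ) : ℂ) * Ye ε j (e.symm l)) ?_ ?_ β ?_
      rotate_left
      · intro i
        exact (Equiv.sum_comp e.symm fun p => Complex.normSq (xv i p)).trans (hxv_norm i)
      · intro j
        simp only [Complex.normSq_mul, Complex.normSq_ofReal]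
        rw [← Finset.mul_sum,
          Equiv.sum_comp e.symm (fun p => Complex.normSq (Ye ε j p)), hYe_norm ε j]
        field_simp
        rw [sq]; exact hρsq.symm
      · intro χ υ hχ hυ
        have hrw : ∀ (χ υ : Fin Q → ℝ),
            (∑ i, ∑ j, (∑ k, sg (ε k) * T i j k) * χ i * υ j)
              = ∑ i, ∑ j, ∑ k, T i j k * χ i * υ j * sg (ε k) := by
          intro χ υ
          refine Finset.sum_congr rfl fun i _ => Finset.sum_congr rfl fun j _ => ?_
          rw [Finset.sum_mul, Finset.sum_mul]
          exact Finset.sum_congr rfl fun k _ => by ring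
        have hup := hβ χ υ (fun k => sg (ε k)) hχ hυ (sg_sign ε)
        have hχ' : IsSign (fun i => -χ i) := by
          intro i
          rcases hχ i with h | h
          · exact Or.inr (by simp [h])
          · exact Or.inl (by simp [h])
        have hdown := hβ (fun i => -χ i) υ (fun k => sg (ε k)) hχ' hυ (sg_sign ε)
        have hneg : ∑ i, ∑ j, ∑ k, T i j k * (-χ i) * υ j * sg (ε k)
            = -∑ i, ∑ j, ∑ k, T i j k * χ i * υ j * sg (ε k) := by
          simp only [← Finset.sum_neg_distrib]
          exact Finset.sum_congr rfl fun i _ => Finset.sum_congr rfl fun j _ =>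
            Finset.sum_congr rfl fun k _ => by ring
        rw [abs_le]
        constructor
        · rw [hrw χ υ]
          have : ∑ i, ∑ j, ∑ k, T i j k * (-χ i) * υ j * sg (ε k) ≤ β := by simpa using hdown
          rw [hneg] at this
          linarith
        · rw [hrw χ υ]
          simpa using hup
      -- rewrite the inner product in `happ`
      have hinner : ∀ i j : Fin Q,
          (∑ l, (starRingEnd ℂ) (xv i (e.symm l)) * (((ρ⁻¹ : ℝ) : ℂ) * Ye ε j (e.symm l)))
            = ((ρ⁻¹ : ℝ) : ℂ) * (star (xv i) ⬝ᵥ Ye ε j) := by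
        intro i j
        rw [Equiv.sum_comp e.symm
          (fun p => (starRingEnd ℂ) (xv i p) * (((ρ⁻¹ : ℝ) : ℂ) * Ye ε j p))]
        simp only [dotProduct, Pi.star_apply, Complex.star_def, Finset.mul_sum]
        exact Finset.sum_congr rfl fun p _ => by ring
      set Z : ℂ := ∑ i, ∑ j, ((∑ k, sg (ε k) * T i j k : ℝ) : ℂ) * (star (xv i) ⬝ᵥ Ye ε j)
        with hZ
      have hZfold : (∑ i, ∑ j, ((∑ k, sg (ε k) * T i j k : ℝ) : ℂ)
          * ∑ l, (starRingEnd ℂ) (xv i (e.symm l)) * (((ρ⁻¹ : ℝ) : ℂ) * Ye ε j (e.symm l)))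
            = ((ρ⁻¹ : ℝ) : ℂ) * Z := by
        rw [hZ, Finset.mul_sum]
        refine Finset.sum_congr rfl fun i _ => ?_
        rw [Finset.mul_sum]
        refine Finset.sum_congr rfl fun j _ => ?_
        rw [hinner i j]
        ring
      rw [hZfold] at happ
      have hZre : Z.re = F ε := by
        rw [hZ, hF, Complex.re_sum]
        refine Finset.sum_congr rfl fun i _ => ?_
        rw [Complex.re_sum]
        exact Finset.sum_congr rfl fun j _ => Complex.re_ofReal_mul _ _
      have h1 : ((((ρ⁻¹ : ℝ)) : ℂ) * Z).re = ρ⁻¹ * F ε := by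
        rw [Complex.re_ofReal_mul, hZre]
      have h2 : ρ⁻¹ * F ε ≤ K * β := by
        calc ρ⁻¹ * F ε = ((((ρ⁻¹ : ℝ)) : ℂ) * Z).re := h1.symm
          _ ≤ ‖(((ρ⁻¹ : ℝ)) : ℂ) * Z‖ := Complex.re_le_norm _
          _ ≤ K * β := happ
      calc F ε = ρ * (ρ⁻¹ * F ε) := by
            field_simp
        _ ≤ ρ * (K * β) := mul_le_mul_of_nonneg_left h2 (le_of_lt hρpos)
  -- Claim C : Cauchy-Schwarz over the sign vectors
  have claimC : ∑ ε : (Fin Q → Bool), Real.sqrt (ν ε) ≤ 2^Q * Real.sqrt Q := by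
    have hcs := Finset.sum_mul_sq_le_sq_mul_sq Finset.univ
      (fun _ : Fin Q → Bool => (1:ℝ)) (fun ε => Real.sqrt (ν ε))
    simp only [one_mul, one_pow] at hcs
    have hsq : ∀ ε : Fin Q → Bool, Real.sqrt (ν ε)^2 = ν ε :=
      fun ε => Real.sq_sqrt (hν_nonneg ε)
    rw [Finset.sum_congr rfl fun ε _ => hsq ε, hν_sum] at hcs
    have hcard : ∑ _ε : (Fin Q → Bool), (1:ℝ) = 2^Q := by
      simp [Finset.card_univ]
    rw [hcard] at hcs
    have hb : (0:ℝ) ≤ 2^Q * Real.sqrt Q := by positivity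
    refine le_of_pow_le_pow_left₀ two_ne_zero hb ?_
    calc (∑ ε : (Fin Q → Bool), Real.sqrt (ν ε))^2
        ≤ 2^Q * (2^Q * Q) := hcs
      _ = (2^Q * Real.sqrt Q)^2 := by
          rw [mul_pow, Real.sq_sqrt (Nat.cast_nonneg Q)]
          ring
  -- put everything together
  have hLHS : (∑ i, ∑ j, ∑ k, T i j k *
      (∑ p, ∑ q, (starRingEnd ℂ) (ψ p) *
        (A i p.1 q.1 * B j p.2.1 q.2.1 * C k p.2.2 q.2.2) * ψ q).re)
        = ∑ i, ∑ j, ∑ k, T i j k * (R i j k).re := by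
    refine Finset.sum_congr rfl fun i _ => Finset.sum_congr rfl fun j _ =>
      Finset.sum_congr rfl fun k _ => ?_
    rw [hRdef]
    dsimp only
    rw [hxv, hwv]
    dsimp only
    rw [key1 (hA i).1 (B j) (C k) ψ]
  have h2Qpos : (0:ℝ) < 2^Q := by positivity
  calc (∑ i, ∑ j, ∑ k, T i j k *
      (∑ p, ∑ q, (starRingEnd ℂ) (ψ p) *
        (A i p.1 q.1 * B j p.2.1 q.2.1 * C k p.2.2 q.2.2) * ψ q).re)
      = ∑ i, ∑ j, ∑ k, T i j k * (R i j k).re := hLHS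
    _ = (2^Q : ℝ)⁻¹ * ∑ ε : (Fin Q → Bool), F ε := by
        rw [claimA, ← mul_assoc, inv_mul_cancel₀ (ne_of_gt h2Qpos), one_mul]
    _ ≤ (2^Q : ℝ)⁻¹ * ∑ ε : (Fin Q → Bool), Real.sqrt (ν ε) * (K * β) := by
        exact mul_le_mul_of_nonneg_left
          (Finset.sum_le_sum fun ε _ => claimB ε) (by positivity)
    _ = (2^Q : ℝ)⁻¹ * ((∑ ε : (Fin Q → Bool), Real.sqrt (ν ε)) * (K * β)) := by
        rw [← Finset.sum_mul]
    _ ≤ (2^Q : ℝ)⁻¹ * ((2^Q * Real.sqrt Q) * (K * β)) := by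
        refine mul_le_mul_of_nonneg_left ?_ (by positivity)
        exact mul_le_mul_of_nonneg_right claimC hKβ
    _ = Real.sqrt Q * K * β := by
        field_simp
end
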